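/- arXiv:2512.11946 — 2 statements merged into one kernel-verified Lean document; each statement's English description precedes it below -/
import Mathlib

section
/- If f(x,y) = Σ_{ℓ=1}^k g_ℓ(x) h_ℓ(y) with x and y independent (g_ℓ square-integrable in x, h_ℓ integrable in y with appropriate integrability), then E_y[sqrt(Var_x[f(x,y)])] ≥ sqrt(Var_x[E_y[f(x,y)]]). In particular, the PDP feature importance is a lower bound on the expected ICE feature importance for any function expressible as a finite linear combination of tensor-product basis functions (e.g., any truncated polynomial chaos expansion). -/
open MeasureTheory ProbabilityTheory

private theorem lp_coeFn_sum {α E : Type*} [MeasurableSpace α] {μ : Measure α}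
    [NormedAddCommGroup E] {ι : Type*} (s : Finset ι) (F : ι → Lp E 2 μ) :
    ⇑(∑ i ∈ s, F i) =ᵐ[μ] fun x => ∑ i ∈ s, F i x := by
  classical
  induction s using Finset.induction with
  | empty => simp only [Finset.sum_empty]; exact Lp.coeFn_zero E 2 μ
  | @insert a s hi ih =>
    rw [Finset.sum_insert hi]
    filter_upwards [Lp.coeFn_add (F a) (∑ i ∈ s, F i), ih] with x hx hx'
    rw [hx, Pi.add_apply, hx', Finset.sum_insert hi]

/-- For `f(x,y) = Σ_ℓ g_ℓ(x) h_ℓ(y)` with independent `x`, `y`, the expected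
ICE importance dominates the PDP importance:
`E_y[sqrt(Var_x f(x,y))] ≥ sqrt(Var_x[E_y f(x,y)])`. -/
theorem ice_ge_pdp_sum_separable
    {Ω₁ Ω₂ : Type*} [MeasurableSpace Ω₁] [MeasurableSpace Ω₂]
    (μ : Measure Ω₁) (ν : Measure Ω₂)
    [IsProbabilityMeasure μ] [IsProbabilityMeasure ν]
    {k : ℕ} (g : Fin k → Ω₁ → ℝ) (h : Fin k → Ω₂ → ℝ)
    (hg : ∀ ℓ, MemLp (g ℓ) 2 μ)
    (hh : ∀ ℓ, Integrable (h ℓ) ν)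
    (hh2 : ∀ ℓ r, Integrable (fun y => h ℓ y * h r y) ν) :
    (∫ y, Real.sqrt (variance (fun x => ∑ ℓ, g ℓ x * h ℓ y) μ) ∂ν)
      ≥ Real.sqrt (variance (fun x => ∫ y, ∑ ℓ, g ℓ x * h ℓ y ∂ν) μ) := by
  classical
  have hGmem : ∀ ℓ, MemLp (fun x => g ℓ x - ∫ x, g ℓ x ∂μ) 2 μ := fun ℓ =>
    (hg ℓ).sub (memLp_const _)
  set G : Fin k → Lp ℝ 2 μ := fun ℓ =>
    (hGmem ℓ).toLp (fun x => g ℓ x - ∫ x, g ℓ x ∂μ) with hGdef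
  have hint : ∀ ℓ : Fin k, Integrable (g ℓ) μ := fun ℓ => (hg ℓ).integrable one_le_two
  -- key identity: the sqrt-variance of a linear combination is an Lp norm
  have key : ∀ c : Fin k → ℝ,
      Real.sqrt (variance (fun x => ∑ ℓ, c ℓ * g ℓ x) μ) = ‖∑ ℓ, c ℓ • G ℓ‖ := by
    intro c
    have hX : MemLp (fun x => ∑ ℓ, c ℓ * g ℓ x) 2 μ :=
      memLp_finset_sum (f := fun ℓ => fun x => c ℓ * g ℓ x) Finset.univ
        (fun ℓ _ => (hg ℓ).const_mul (c ℓ))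
    have hEX : (∫ x, ∑ ℓ, c ℓ * g ℓ x ∂μ) = ∑ ℓ, c ℓ * ∫ x, g ℓ x ∂μ := by
      rw [integral_finset_sum _ (fun ℓ _ => (hint ℓ).const_mul (c ℓ))]
      simp [integral_const_mul]
    have hF : ⇑(∑ ℓ, c ℓ • G ℓ) =ᵐ[μ]
        fun x => ∑ ℓ, c ℓ * (g ℓ x - ∫ x, g ℓ x ∂μ) := by
      have h1 := lp_coeFn_sum Finset.univ (fun ℓ => c ℓ • G ℓ)
      have h2 : ∀ ℓ : Fin k, ⇑(c ℓ • G ℓ) =ᵐ[μ]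
          fun x => c ℓ * (g ℓ x - ∫ x, g ℓ x ∂μ) := by
        intro ℓ
        filter_upwards [Lp.coeFn_smul (c ℓ) (G ℓ), (hGmem ℓ).coeFn_toLp] with x hx hx'
        rw [hx, Pi.smul_apply, hGdef, hx', smul_eq_mul]
      have h3 : ∀ᵐ x ∂μ, ∀ ℓ : Fin k,
          (c ℓ • G ℓ) x = c ℓ * (g ℓ x - ∫ x, g ℓ x ∂μ) :=
        (ae_all_iff).mpr h2
      filter_upwards [h1, h3] with x hx hx'
      rw [hx]
      exact Finset.sum_congr rfl fun ℓ _ => hx' ℓ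
    have hvar : variance (fun x => ∑ ℓ, c ℓ * g ℓ x) μ = ‖∑ ℓ, c ℓ • G ℓ‖ ^ 2 := by
      rw [variance_eq_integral hX.aestronglyMeasurable.aemeasurable, ← real_inner_self_eq_norm_sq, L2.inner_def]
      refine integral_congr_ae ?_
      filter_upwards [hF] with x hx
      simp only [Pi.pow_apply, Pi.sub_apply, RCLike.inner_apply, starRingEnd_apply,
        star_trivial, hx, hEX, mul_sub, ← Finset.sum_sub_distrib]
      ring
    rw [hvar, Real.sqrt_sq (norm_nonneg _)]
  -- the Lp-valued map
  set Φ : Ω₂ → Lp ℝ 2 μ := fun y => ∑ ℓ, h ℓ y • G ℓ with hΦdef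
  have hΦint : Integrable Φ ν :=
    integrable_finset_sum _ (fun ℓ _ => (hh ℓ).smul_const (G ℓ))
  have hΦI : ∫ y, Φ y ∂ν = ∑ ℓ, (∫ y, h ℓ y ∂ν) • G ℓ := by
    rw [hΦdef, integral_finset_sum _ (fun ℓ _ => (hh ℓ).smul_const (G ℓ))]
    simp [integral_smul_const]
  have hL : ∀ y, Real.sqrt (variance (fun x => ∑ ℓ, g ℓ x * h ℓ y) μ) = ‖Φ y‖ := by
    intro y
    have he : (fun x => ∑ ℓ, g ℓ x * h ℓ y) = fun x => ∑ ℓ, h ℓ y * g ℓ x := by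
      funext x; exact Finset.sum_congr rfl fun ℓ _ => mul_comm _ _
    rw [he]; exact key (fun ℓ => h ℓ y)
  have hR : (fun x => ∫ y, ∑ ℓ, g ℓ x * h ℓ y ∂ν)
      = fun x => ∑ ℓ, (∫ y, h ℓ y ∂ν) * g ℓ x := by
    funext x
    rw [integral_finset_sum _ (fun ℓ _ => (hh ℓ).const_mul (g ℓ x))]
    refine Finset.sum_congr rfl fun ℓ _ => ?_
    rw [integral_const_mul, mul_comm]
  calc Real.sqrt (variance (fun x => ∫ y, ∑ ℓ, g ℓ x * h ℓ y ∂ν) μ)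
      = ‖∑ ℓ, (∫ y, h ℓ y ∂ν) • G ℓ‖ := by rw [hR]; exact key _
    _ = ‖∫ y, Φ y ∂ν‖ := by rw [hΦI]
    _ ≤ ∫ y, ‖Φ y‖ ∂ν := norm_integral_le_integral_norm _
    _ = ∫ y, Real.sqrt (variance (fun x => ∑ ℓ, g ℓ x * h ℓ y) μ) ∂ν := by
        exact integral_congr_ae (ae_of_all _ fun y => (hL y).symm)
end

section
/- If f(x,y) = g(x)h(y) with x, y independent and E_y[h(y)] = 0 but h not identically zero, and g is non-constant, then the PDP importance of x is zero while the expected ICE importance is strictly positive: sqrt(Var_x[E_y f(x,y)]) = 0 < E_y[|h(y)|]·sqrt(Var_x[g(x)]) = E_y[sqrt(Var_x[f(x,y)])]. -/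
open MeasureTheory ProbabilityTheory

/-- Strict gap for a pure interaction term: if `f(x,y) = g(x)h(y)` with
`E[h] = 0`, `h` not a.e. zero and `g` non-constant, the PDP importance of `x`
is zero while the expected ICE importance `E_y[|h|]·sd(g)` is strictly
positive. -/
theorem pdp_zero_ice_positive_pure_interaction
    {Ω₁ Ω₂ : Type*} [MeasurableSpace Ω₁] [MeasurableSpace Ω₂]
    (μ : Measure Ω₁) (ν : Measure Ω₂)
    [IsProbabilityMeasure μ] [IsProbabilityMeasure ν]
    (g : Ω₁ → ℝ) (h : Ω₂ → ℝ)
    (hg : MemLp g 2 μ) (hgvar : 0 < variance g μ)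
    (hh : Integrable h ν) (hmean : (∫ y, h y ∂ν) = 0)
    (hne : ¬ (∀ᵐ y ∂ν, h y = 0)) :
    Real.sqrt (variance (fun x => ∫ y, g x * h y ∂ν) μ) = 0 ∧
      0 < (∫ y, |h y| ∂ν) * Real.sqrt (variance g μ) ∧
      (∫ y, |h y| ∂ν) * Real.sqrt (variance g μ)
        = ∫ y, Real.sqrt (variance (fun x => g x * h y) μ) ∂ν := by
  refine ⟨?_, ?_, ?_⟩
  · have : (fun x => ∫ y, g x * h y ∂ν) = fun _ => 0 := by
      funext x
      rw [integral_const_mul, hmean, mul_zero]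
    rw [this]
    have h0 : variance (fun _ : Ω₁ => (0:ℝ)) μ = 0 := by
      have := variance_const_mul 0 g μ
      simpa using this
    rw [h0, Real.sqrt_zero]
  · have habs : 0 < ∫ y, |h y| ∂ν := by
      have h0 : ∫ y, |h y| ∂ν ≠ 0 := by
        intro h0
        exact hne <| by
          have := (integral_eq_zero_iff_of_nonneg (fun y => abs_nonneg (h y)) hh.abs).mp h0
          filter_upwards [this] with y hy using abs_eq_zero.mp hy
      exact lt_of_le_of_ne (integral_nonneg fun y => abs_nonneg _) (Ne.symm h0)
    exact mul_pos habs (Real.sqrt_pos.mpr hgvar)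
  · have : ∀ y, Real.sqrt (variance (fun x => g x * h y) μ)
        = |h y| * Real.sqrt (variance g μ) := by
      intro y
      have : (fun x => g x * h y) = fun x => h y * g x := by funext x; ring
      rw [this, variance_const_mul, Real.sqrt_mul (sq_nonneg _), Real.sqrt_sq_eq_abs]
    simp_rw [this]
    rw [integral_mul_const]
end
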